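/- Let F_q be a finite field and let m ≥ 3 be an integer. For every m-tuple (n_1,…,n_m) of integers with 2 ≤ n_j ≤ q for all j, there exists an optimal (r,δ)-LRC over F_q of length n = n_1⋯n_m with dimension k, minimum distance d and locality (r,δ) as follows, for any j_0 ∈ {1,…,m}: (1) k = (i_{j_0}+1)∏_{j≠j_0} n_j, d = n_{j_0}−i_{j_0} and (r,δ) = (i_{j_0}+1, n_{j_0}−i_{j_0}), where i_{j_0} ∈ {0,…,n_{j_0}−2}; (2) k = (i_{j_0}+1)∏_{j≠j_0} n_j − (i_{j_0}−s+1), d = n_{j_0}−s+1 and (r,δ) = (i_{j_0}+1, n_{j_0}−i_{j_0}), where max{1, 2i_{j_0}−n_{j_0}+1} ≤ s ≤ i_{j_0} ≤ n_{j_0}−2; (3) k = ∏_{j≠j_0} n_j − 1, d = 2n_{j_0} and (r,δ) = (1, n_{j_0}). -/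

import Mathlib

/-- The code `C ⊆ F^ι` has minimum Hamming distance exactly `d`. -/
def HasMinDist {F ι : Type*} [Field F] [DecidableEq F] [Fintype ι]
    (C : Submodule F (ι → F)) (d : ℕ) : Prop :=
  (∀ c ∈ C, c ≠ 0 → d ≤ hammingNorm c) ∧ ∃ c ∈ C, c ≠ 0 ∧ hammingNorm c = d

/-- The code `C ⊆ F^ι` is an `(r, δ)`-locally recoverable code: every coordinate `i` lies in a
set `R̄` of at most `r + δ - 1` coordinates such that the punctured code `C[R̄]` has minimum
Hamming distance at least `δ`. -/
def IsLRC {F ι : Type*} [Field F] [DecidableEq F] [DecidableEq ι] [Fintype ι]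
    (C : Submodule F (ι → F)) (r δ : ℕ) : Prop :=
  ∀ i : ι, ∃ R : Finset ι, i ∈ R ∧ R.card ≤ r + δ - 1 ∧
    ∀ c ∈ C, (∃ j ∈ R, c j ≠ 0) → δ ≤ (R.filter fun j => c j ≠ 0).card

/-- There exists a linear code over `F` of length `n`, dimension `k` and minimum distance `d`
which is an optimal `(r, δ)`-LRC, i.e. attaining the Singleton-like bound
`k + d + (⌈k/r⌉ - 1)(δ - 1) = n + 1`. -/
def IsOptimalLRCParams (F : Type*) [Field F] [DecidableEq F] (n k d r δ : ℕ) : Prop :=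
  ∃ C : Submodule F (Fin n → F),
    Module.finrank F C = k ∧ HasMinDist C d ∧ IsLRC C r δ ∧
      k + d + ((k + r - 1) / r - 1) * (δ - 1) = n + 1

open Finset Polynomial

section Helpers

variable {F : Type*} [Field F] [DecidableEq F]

lemma fin_card_filter_lt (n0 t : ℕ) (h : t ≤ n0) :
    ((Finset.univ : Finset (Fin n0)).filter fun p : Fin n0 => (p : ℕ) < t).card = t := by
  have himg : (Finset.univ.filter fun p : Fin n0 => (p : ℕ) < t).image Fin.val
      = Finset.range t := by
    ext j
    simp only [Finset.mem_image, Finset.mem_filter, Finset.mem_univ, true_and, Finset.mem_range]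
    constructor
    · rintro ⟨p, hp, rfl⟩; exact hp
    · intro hj; exact ⟨⟨j, lt_of_lt_of_le hj h⟩, hj, rfl⟩
  have := Finset.card_image_of_injective
    (Finset.univ.filter fun p : Fin n0 => (p : ℕ) < t) Fin.val_injective
  rw [himg, Finset.card_range] at this
  omega

lemma card_filter_prod {β γ : Type*} [Fintype β] [Fintype γ] [DecidableEq β]
    (P : β × γ → Prop) [DecidablePred P] :
    (Finset.univ.filter P).card = ∑ t : β, (Finset.univ.filter fun p => P (t, p)).card := by
  rw [Finset.card_eq_sum_card_fiberwise (f := Prod.fst) (t := Finset.univ)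
    (fun x _ => Finset.mem_univ _)]
  refine Finset.sum_congr rfl fun t _ => ?_
  refine Finset.card_nbij' (fun x => x.2) (fun p => (t, p)) ?_ ?_ ?_ ?_
  · rintro ⟨a, b⟩ hx
    simp only [Finset.mem_coe, Finset.mem_filter, Finset.mem_univ, true_and] at hx ⊢
    obtain ⟨hP, rfl⟩ := hx
    exact hP
  · intro p hp
    simp only [Finset.mem_coe, Finset.mem_filter, Finset.mem_univ, true_and] at hp
    simp [hp]
  · rintro ⟨a, b⟩ hx
    simp only [Finset.mem_coe, Finset.mem_filter, Finset.mem_univ, true_and] at hx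
    obtain ⟨-, rfl⟩ := hx
    rfl
  · intro p _; rfl

/-- A nonzero "polynomial" with coefficients vanishing above degree `D` has at most `D` zeros
among distinct evaluation points. -/
lemma zeros_card_le {n0 M : ℕ} (α : Fin n0 ↪ F) (b : Fin M → F) (hb : b ≠ 0) (D : ℕ)
    (hD : ∀ u : Fin M, D < (u : ℕ) → b u = 0) :
    ((Finset.univ : Finset (Fin n0)).filter fun p => ∑ u, b u * α p ^ (u : ℕ) = 0).card ≤ D := by
  set f : F[X] := ∑ u : Fin M, Polynomial.C (b u) * Polynomial.X ^ (u : ℕ) with hf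
  have hcoeff : ∀ j : ℕ, f.coeff j = if h : j < M then b ⟨j, h⟩ else 0 := by
    intro j
    rw [hf, Polynomial.finset_sum_coeff]
    simp only [Polynomial.coeff_C_mul, Polynomial.coeff_X_pow]
    by_cases h : j < M
    · rw [dif_pos h]
      rw [Finset.sum_eq_single (⟨j, h⟩ : Fin M)]
      · simp
      · intro u _ hu
        have : j ≠ (u : ℕ) := fun hju => hu (by ext; simp [← hju])
        simp [this]
      · simp
    · rw [dif_neg h]
      apply Finset.sum_eq_zero
      intro u _
      have : j ≠ (u : ℕ) := by have := u.isLt; omega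
      simp [this]
  have hf0 : f ≠ 0 := by
    intro h
    apply hb
    funext u
    have := hcoeff u
    rw [h] at this
    simpa [u.isLt] using this.symm
  have heval : ∀ x : F, f.eval x = ∑ u : Fin M, b u * x ^ (u : ℕ) := by
    intro x; rw [hf]; simp [Polynomial.eval_finset_sum]
  have hdeg : f.natDegree ≤ D := by
    rw [Polynomial.natDegree_le_iff_coeff_eq_zero]
    intro j hj
    rw [hcoeff]
    split
    · exact hD _ (by simpa using hj)
    · rfl
  refine le_trans ?_ hdeg
  have hinj : Set.InjOn (fun p : Fin n0 => α p)
      ((Finset.univ : Finset (Fin n0)).filter fun p => ∑ u, b u * α p ^ (u : ℕ) = 0) := by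
    intro x _ y _ hxy
    exact α.injective hxy
  calc ((Finset.univ : Finset (Fin n0)).filter fun p => ∑ u, b u * α p ^ (u : ℕ) = 0).card
      = (((Finset.univ : Finset (Fin n0)).filter
          fun p => ∑ u, b u * α p ^ (u : ℕ) = 0).image fun p => α p).card := by
        rw [Finset.card_image_of_injOn hinj]
    _ ≤ f.natDegree := by
        apply Polynomial.card_le_degree_of_subset_roots
        intro z hz
        simp only [Finset.mem_val, Finset.mem_image, Finset.mem_filter, Finset.mem_univ,
          true_and] at hz
        obtain ⟨p, hp, rfl⟩ := hz
        rw [Polynomial.mem_roots hf0, Polynomial.IsRoot, heval]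
        exact hp

end Helpers

section Master

variable {F : Type*} [Field F] [DecidableEq F]

lemma achieve_block {n0 M : ℕ} (α : Fin n0 ↪ F) (t : ℕ) (htM : t < M) (htn : t < n0) :
    ∃ b : Fin M → F, (∀ u : Fin M, t < (u : ℕ) → b u = 0) ∧
      ((Finset.univ : Finset (Fin n0)).filter
        fun p => (∑ u : Fin M, b u * α p ^ (u : ℕ)) ≠ 0).card = n0 - t := by
  classical
  set g : Polynomial F := ∏ k : Fin t, (X - C (α ⟨(k : ℕ), lt_trans k.isLt htn⟩)) with hg
  have hgdeg : g.natDegree = t := by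
    rw [hg, Polynomial.natDegree_prod _ _ (fun k _ => Polynomial.X_sub_C_ne_zero _)]
    simp
  refine ⟨fun u => g.coeff (u : ℕ), ?_, ?_⟩
  · intro u hu
    exact Polynomial.coeff_eq_zero_of_natDegree_lt (by omega)
  · have heval : ∀ x : F, (∑ u : Fin M, g.coeff (u : ℕ) * x ^ (u : ℕ)) = g.eval x := by
      intro x
      rw [Polynomial.eval_eq_sum_range' (show g.natDegree < M by omega)]
      rw [← Fin.sum_univ_eq_sum_range (fun i => g.coeff i * x ^ i) M]
    have hpred : ∀ p : Fin n0, (g.eval (α p) ≠ 0) ↔ ¬ ((p : ℕ) < t) := by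
      intro p
      rw [hg]
      simp only [Polynomial.eval_prod, Polynomial.eval_sub, Polynomial.eval_X,
        Polynomial.eval_C]
      rw [Finset.prod_ne_zero_iff]
      constructor
      · intro h hpt
        refine (h ⟨(p : ℕ), hpt⟩ (Finset.mem_univ _)) ?_
        rw [sub_eq_zero]
      · intro hpt k _
        rw [sub_ne_zero]
        intro hcontra
        apply hpt
        have h1 := α.injective hcontra
        have h2 : (p : ℕ) = (k : ℕ) := by rw [Fin.ext_iff] at h1; exact h1
        rw [h2]
        exact k.isLt
    have hfe : ((Finset.univ : Finset (Fin n0)).filter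
        fun p => (∑ u : Fin M, g.coeff (u : ℕ) * α p ^ (u : ℕ)) ≠ 0)
        = (Finset.univ : Finset (Fin n0)).filter fun p : Fin n0 => ¬ ((p : ℕ) < t) := by
      apply Finset.filter_congr
      intro p _
      rw [heval (α p)]
      exact hpred p
    rw [hfe]
    have h2 := Finset.card_filter_add_card_filter_not
      (s := (Finset.univ : Finset (Fin n0))) (p := fun p : Fin n0 => (p : ℕ) < t)
    rw [fin_card_filter_lt n0 t (le_of_lt htn)] at h2
    simp only [Finset.card_univ, Fintype.card_fin] at h2
    omega


lemma master {n0 N i0 s d : ℕ} (α : Fin n0 ↪ F) (hi0 : i0 + 2 ≤ n0) (hs : s ≤ i0 + 1)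
    (hN : 2 ≤ N)
    (hd : d = if s = 0 then 2 * (n0 - i0) else n0 - s + 1)
    (hd2 : d ≤ 2 * (n0 - i0)) :
    ∃ C : Submodule F (Fin N × Fin n0 → F),
      Module.finrank F C = (i0 + 1) * N - (i0 + 1 - s) ∧ HasMinDist C d ∧
        IsLRC C (i0 + 1) (n0 - i0) := by
  classical
  set M := i0 + 1 with hM
  let E : (Fin N → Fin M → F) →ₗ[F] (Fin N × Fin n0 → F) :=
    { toFun := fun a tp => ∑ u : Fin M, a tp.1 u * α tp.2 ^ (u : ℕ)
      map_add' := by intro a b; funext tp; simp [add_mul, Finset.sum_add_distrib]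
      map_smul' := by intro r a; funext tp; simp [Finset.mul_sum, mul_assoc] }
  let ψ : (Fin N → Fin M → F) →ₗ[F] ({u : Fin M // s ≤ (u : ℕ)} → F) :=
    { toFun := fun a u => ∑ t : Fin N, a t u.1
      map_add' := by intro a b; funext u; simp [Finset.sum_add_distrib]
      map_smul' := by intro r a; funext u; simp [Finset.mul_sum] }
  have hEapp : ∀ (a : Fin N → Fin M → F) (tp : Fin N × Fin n0),
      E a tp = ∑ u : Fin M, a tp.1 u * α tp.2 ^ (u : ℕ) := fun a tp => rfl
  have hψapp : ∀ (a : Fin N → Fin M → F) (u : {u : Fin M // s ≤ (u : ℕ)}),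
      ψ a u = ∑ t : Fin N, a t u.1 := fun a u => rfl
  set w : (Fin N → Fin M → F) → Fin N → ℕ := fun a t =>
    ((Finset.univ : Finset (Fin n0)).filter
      fun p => (∑ u : Fin M, a t u * α p ^ (u : ℕ)) ≠ 0).card with hw
  -- block weight bound
  have hwcompl : ∀ (a : Fin N → Fin M → F) (t : Fin N),
      w a t = n0 - ((Finset.univ : Finset (Fin n0)).filter
        fun p => (∑ u : Fin M, a t u * α p ^ (u : ℕ)) = 0).card := by
    intro a t
    simp only [hw]
    have h2 := Finset.card_filter_add_card_filter_not
      (s := (Finset.univ : Finset (Fin n0)))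
      (p := fun p => (∑ u : Fin M, a t u * α p ^ (u : ℕ)) = 0)
    simp only [Finset.card_univ, Fintype.card_fin] at h2
    have : ((Finset.univ : Finset (Fin n0)).filter
        fun p => ¬ (∑ u : Fin M, a t u * α p ^ (u : ℕ)) = 0) =
        ((Finset.univ : Finset (Fin n0)).filter
        fun p => (∑ u : Fin M, a t u * α p ^ (u : ℕ)) ≠ 0) := by
      simp [ne_eq]
    rw [this] at h2
    omega
  have hEblock : ∀ (a : Fin N → Fin M → F) (t : Fin N), a t ≠ 0 → n0 - i0 ≤ w a t := by
    intro a t hat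
    have hz := zeros_card_le α (a t) hat i0 (fun u hu => absurd u.isLt (by omega))
    rw [hwcompl]
    omega
  have hEinj : Function.Injective E := by
    rw [← LinearMap.ker_eq_bot, LinearMap.ker_eq_bot']
    intro a ha
    funext t
    by_contra hat
    have h1 := hEblock a t hat
    have h2 : w a t = 0 := by
      simp only [hw]
      simp only [Finset.card_eq_zero]
      apply Finset.filter_eq_empty_iff.mpr
      intro p _
      have := congrFun ha (t, p)
      rw [hEapp] at this
      simpa using this
    omega
  have hnorm : ∀ a : Fin N → Fin M → F, hammingNorm (E a) = ∑ t : Fin N, w a t := by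
    intro a
    show ((Finset.univ : Finset (Fin N × Fin n0)).filter fun tp => E a tp ≠ 0).card = _
    rw [card_filter_prod (fun tp => E a tp ≠ 0)]
    rfl
  have hψsurj : Function.Surjective ψ := by
    intro g
    refine ⟨fun t u => if t = (⟨0, by omega⟩ : Fin N) then
      (if h : s ≤ (u : ℕ) then g ⟨u, h⟩ else 0) else 0, ?_⟩
    funext u
    rw [hψapp]
    rw [Finset.sum_eq_single (⟨0, by omega⟩ : Fin N)]
    · rw [if_pos rfl, dif_pos u.2]
    · intro t _ ht; rw [if_neg ht]
    · intro h; exact absurd (Finset.mem_univ _) h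
  refine ⟨(LinearMap.ker ψ).map E, ?_, ?_, ?_⟩
  · -- dimension
    have hK : Fintype.card {u : Fin M // s ≤ (u : ℕ)} = M - s := by
      rw [Fintype.card_subtype]
      have h2 := Finset.card_filter_add_card_filter_not
        (s := (Finset.univ : Finset (Fin M))) (p := fun u : Fin M => (u : ℕ) < s)
      rw [fin_card_filter_lt M s (by omega)] at h2
      simp only [Finset.card_univ, Fintype.card_fin, not_lt] at h2
      omega
    have h1 := LinearMap.finrank_range_add_finrank_ker ψ
    rw [LinearMap.range_eq_top.mpr hψsurj, finrank_top] at h1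
    have hcodom : Module.finrank F ({u : Fin M // s ≤ (u : ℕ)} → F) = M - s := by
      rw [Module.finrank_pi, hK]
    have hdom : Module.finrank F (Fin N → Fin M → F) = N * M := by
      simp [Module.finrank_pi_fintype, Module.finrank_pi]
    rw [hcodom, hdom] at h1
    rw [← (Submodule.equivMapOfInjective E hEinj (LinearMap.ker ψ)).finrank_eq]
    have hcomm : (i0 + 1) * N = N * M := by rw [hM, mul_comm]
    rw [hcomm]
    omega
  · -- minimum distance
    constructor
    · intro c hc hc0
      obtain ⟨a, haA, rfl⟩ := Submodule.mem_map.mp hc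
      have haψ : ψ a = 0 := LinearMap.mem_ker.mp haA
      set T := Finset.univ.filter fun t : Fin N => a t ≠ 0 with hT
      have hwT : ∀ t ∈ T, n0 - i0 ≤ w a t := by
        intro t ht
        exact hEblock a t (Finset.mem_filter.mp ht).2
      have hTne : T.Nonempty := by
        by_contra h
        apply hc0
        have ha0 : a = 0 := by
          funext t
          by_contra hat
          exact h ⟨t, Finset.mem_filter.mpr ⟨Finset.mem_univ _, hat⟩⟩
        rw [ha0, map_zero]
      rw [hnorm]
      have hone : 1 ≤ T.card := Finset.card_pos.mpr hTne
      rcases eq_or_lt_of_le hone with h1 | h2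
      · -- single block
        obtain ⟨t, hTt⟩ := Finset.card_eq_one.mp h1.symm
        have hat : a t ≠ 0 := by
          have : t ∈ T := hTt ▸ Finset.mem_singleton_self t
          exact (Finset.mem_filter.mp this).2
        have hz : ∀ t', t' ≠ t → a t' = 0 := by
          intro t' ht'
          by_contra h
          have : t' ∈ T := Finset.mem_filter.mpr ⟨Finset.mem_univ _, h⟩
          rw [hTt, Finset.mem_singleton] at this
          exact ht' this
        have hcon : ∀ u : Fin M, s ≤ (u : ℕ) → a t u = 0 := by
          intro u hu
          have h0 := congrFun haψ ⟨u, hu⟩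
          rw [hψapp] at h0
          rw [Finset.sum_eq_single t] at h0
          · exact h0
          · intro t' _ ht'; exact congrFun (hz t' ht') u
          · intro h; exact absurd (Finset.mem_univ _) h
        by_cases hs0 : s = 0
        · exfalso
          apply hat
          funext u
          exact hcon u (by omega)
        · have hzle := zeros_card_le α (a t) hat (s - 1) (fun u hu => hcon u (by omega))
          have hwt : n0 - (s - 1) ≤ w a t := by rw [hwcompl]; omega
          have hle : w a t ≤ ∑ t' : Fin N, w a t' :=
            Finset.single_le_sum (fun t' _ => Nat.zero_le _) (Finset.mem_univ t)
          rw [hd, if_neg hs0]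
          omega
      · -- at least two blocks
        have hsum : ∑ t ∈ T, w a t ≤ ∑ t : Fin N, w a t :=
          Finset.sum_le_sum_of_subset (Finset.subset_univ T)
        have hlow : T.card * (n0 - i0) ≤ ∑ t ∈ T, w a t := by
          have := Finset.card_nsmul_le_sum T (w a) (n0 - i0) hwT
          simpa [smul_eq_mul] using this
        have h2' : 2 * (n0 - i0) ≤ T.card * (n0 - i0) :=
          Nat.mul_le_mul_right _ h2
        omega
    · -- achiever
      by_cases hs0 : s = 0
      · obtain ⟨b, hb1, hb2⟩ := achieve_block α (M := M) i0 (by omega) (by omega)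
        set t0 : Fin N := ⟨0, by omega⟩ with ht0
        set t1 : Fin N := ⟨1, by omega⟩ with ht1
        have ht01 : t0 ≠ t1 := by
          intro h; rw [Fin.ext_iff] at h; simp [ht0, ht1] at h
        set a : Fin N → Fin M → F := fun t => if t = t0 then b else if t = t1 then -b else 0
          with ha
        have hat0 : a t0 = b := by rw [ha]; simp
        have hat1 : a t1 = -b := by rw [ha]; simp [ht01.symm]
        have hatz : ∀ t, t ≠ t0 → t ≠ t1 → a t = 0 := by
          intro t h0 h1; rw [ha]; simp [h0, h1]
        have hb0 : b ≠ 0 := by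
          intro h
          rw [h] at hb2
          simp only [Pi.zero_apply, zero_mul, Finset.sum_const_zero, ne_eq,
            not_true_eq_false, Finset.filter_false, Finset.card_empty] at hb2
          omega
        refine ⟨E a, Submodule.mem_map.mpr ⟨a, ?_, rfl⟩, ?_, ?_⟩
        · rw [LinearMap.mem_ker]
          funext u
          rw [hψapp]
          have : ∀ t : Fin N, t ∉ ({t0, t1} : Finset (Fin N)) → a t u.1 = 0 := by
            intro t ht
            simp only [Finset.mem_insert, Finset.mem_singleton, not_or] at ht
            rw [hatz t ht.1 ht.2]; rfl
          rw [← Finset.sum_subset (Finset.subset_univ ({t0, t1} : Finset (Fin N)))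
            (fun t _ ht => this t ht)]
          rw [Finset.sum_pair ht01, hat0, hat1]
          simp
        · intro h
          have hn : hammingNorm (E a) = 0 := by rw [h]; simp [hammingNorm]
          rw [hnorm] at hn
          have : w a t0 = 0 := by
            have := Finset.sum_eq_zero_iff.mp hn t0 (Finset.mem_univ _)
            exact this
          simp only [hw] at this
          simp only [hat0] at this
          rw [hb2] at this
          omega
        · rw [hnorm]
          have hsum0 : ∀ t, t ∉ ({t0, t1} : Finset (Fin N)) → w a t = 0 := by
            intro t ht
            simp only [Finset.mem_insert, Finset.mem_singleton, not_or] at ht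
            simp only [hw]
            simp [hatz t ht.1 ht.2]
          rw [← Finset.sum_subset (Finset.subset_univ ({t0, t1} : Finset (Fin N)))
            (fun t _ ht => hsum0 t ht)]
          rw [Finset.sum_pair ht01]
          have hw0 : w a t0 = n0 - i0 := by simp only [hw]; simp only [hat0]; exact hb2
          have hw1 : w a t1 = n0 - i0 := by
            simp only [hw]
            simp only [hat1]
            have : ∀ p : Fin n0, (∑ u : Fin M, (-b) u * α p ^ (u : ℕ)) =
                -(∑ u : Fin M, b u * α p ^ (u : ℕ)) := by
              intro p; simp [neg_mul]
            rw [Finset.filter_congr (fun p _ => by rw [this p, neg_ne_zero])]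
            exact hb2
          rw [hw0, hw1, hd, if_pos hs0]
          omega
      · -- s ≥ 1
        obtain ⟨b, hb1, hb2⟩ := achieve_block α (M := M) (s - 1) (by omega) (by omega)
        set t0 : Fin N := ⟨0, by omega⟩ with ht0
        set a : Fin N → Fin M → F := fun t => if t = t0 then b else 0 with ha
        have hat0 : a t0 = b := by rw [ha]; simp
        have hatz : ∀ t, t ≠ t0 → a t = 0 := by intro t h0; rw [ha]; simp [h0]
        have hb0 : b ≠ 0 := by
          intro h
          rw [h] at hb2
          simp only [Pi.zero_apply, zero_mul, Finset.sum_const_zero, ne_eq,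
            not_true_eq_false, Finset.filter_false, Finset.card_empty] at hb2
          omega
        refine ⟨E a, Submodule.mem_map.mpr ⟨a, ?_, rfl⟩, ?_, ?_⟩
        · rw [LinearMap.mem_ker]
          funext u
          rw [hψapp]
          rw [Finset.sum_eq_single t0]
          · rw [hat0]
            exact hb1 u.1 (by have := u.2; omega)
          · intro t _ ht; exact congrFun (hatz t ht) u.1
          · intro h; exact absurd (Finset.mem_univ _) h
        · intro h
          have hn : hammingNorm (E a) = 0 := by rw [h]; simp [hammingNorm]
          rw [hnorm] at hn
          have := Finset.sum_eq_zero_iff.mp hn t0 (Finset.mem_univ _)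
          simp only [hw] at this
          simp only [hat0] at this
          rw [hb2] at this
          omega
        · rw [hnorm]
          have hsum0 : ∀ t, t ∉ ({t0} : Finset (Fin N)) → w a t = 0 := by
            intro t ht
            simp only [Finset.mem_singleton] at ht
            simp only [hw]
            simp [hatz t ht]
          rw [← Finset.sum_subset (Finset.subset_univ ({t0} : Finset (Fin N)))
            (fun t _ ht => hsum0 t ht)]
          rw [Finset.sum_singleton]
          have hw0 : w a t0 = n0 - (s - 1) := by simp only [hw]; simp only [hat0]; exact hb2
          rw [hw0, hd, if_neg hs0]
          omega
  · -- LRC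
    rintro ⟨t, p⟩
    refine ⟨({t} : Finset (Fin N)) ×ˢ (Finset.univ : Finset (Fin n0)), ?_, ?_, ?_⟩
    · rw [Finset.mem_product]; simp
    · rw [Finset.card_product]
      simp only [Finset.card_singleton, Finset.card_univ, Fintype.card_fin, one_mul]
      omega
    · intro c hc hex
      obtain ⟨a, haA, rfl⟩ := Submodule.mem_map.mp hc
      obtain ⟨j, hjR, hj0⟩ := hex
      have hjt : j.1 = t := by
        have := (Finset.mem_product.mp hjR).1
        simpa using this
      have hat : a t ≠ 0 := by
        intro h
        apply hj0
        rw [hEapp, hjt, h]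
        simp
      have hsrc := hEblock a t hat
      refine le_trans hsrc ?_
      simp only [hw]
      apply Finset.card_le_card_of_injOn (fun p' => (t, p'))
      · intro p' hp'
        simp only [Finset.mem_coe, Finset.mem_filter, Finset.mem_univ, true_and] at hp' ⊢
        refine ⟨Finset.mem_product.mpr ⟨Finset.mem_singleton_self t, Finset.mem_univ _⟩, ?_⟩
        rw [hEapp]
        exact hp'
      · intro x _ y _ hxy
        exact (Prod.mk.injEq _ _ _ _).mp hxy |>.2

end Master

lemma transport {F ι κ : Type*} [Field F] [DecidableEq F] [DecidableEq ι] [DecidableEq κ]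
    [Fintype ι] [Fintype κ] (e : ι ≃ κ) {k d r δ : ℕ} (C : Submodule F (κ → F))
    (h1 : Module.finrank F C = k) (h2 : HasMinDist C d) (h3 : IsLRC C r δ) :
    ∃ C' : Submodule F (ι → F), Module.finrank F C' = k ∧ HasMinDist C' d ∧ IsLRC C' r δ := by
  classical
  let L : (κ → F) ≃ₗ[F] (ι → F) := LinearEquiv.funCongrLeft F F e
  have hLapp : ∀ c : κ → F, L c = fun i => c (e i) := fun c => rfl
  have hnorm : ∀ c : κ → F, hammingNorm (L c) = hammingNorm c := by
    intro c
    show ((Finset.univ : Finset ι).filter fun i => L c i ≠ 0).card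
      = ((Finset.univ : Finset κ).filter fun j => c j ≠ 0).card
    apply Finset.card_nbij' e e.symm
    · intro i hi
      simp only [Finset.mem_coe, Finset.mem_filter, Finset.mem_univ, true_and, hLapp] at hi ⊢
      exact hi
    · intro j hj
      simp only [Finset.mem_coe, Finset.mem_filter, Finset.mem_univ, true_and, hLapp] at hj ⊢
      simpa using hj
    · intro i _; simp
    · intro j _; simp
  refine ⟨C.map (L : (κ → F) →ₗ[F] (ι → F)), ?_, ⟨?_, ?_⟩, ?_⟩
  · rw [LinearEquiv.finrank_map_eq L C, h1]
  · intro c' hc' hc'0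
    obtain ⟨c, hc, rfl⟩ := Submodule.mem_map.mp hc'
    have hc0 : c ≠ 0 := by
      intro h; apply hc'0; rw [h, map_zero]
    rw [LinearEquiv.coe_coe, hnorm]
    exact h2.1 c hc hc0
  · obtain ⟨c, hc, hc0, hcd⟩ := h2.2
    refine ⟨L c, Submodule.mem_map.mpr ⟨c, hc, rfl⟩, ?_, ?_⟩
    · intro h
      apply hc0
      have := congrArg L.symm h
      rw [LinearEquiv.symm_apply_apply, map_zero] at this
      exact this
    · rw [hnorm]; exact hcd
  · intro i
    obtain ⟨R, hiR, hRcard, hR⟩ := h3 (e i)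
    refine ⟨R.map e.symm.toEmbedding, ?_, ?_, ?_⟩
    · exact Finset.mem_map.mpr ⟨e i, hiR, by simp⟩
    · rw [Finset.card_map]; exact hRcard
    · intro c' hc' hex
      obtain ⟨c, hc, rfl⟩ := Submodule.mem_map.mp hc'
      simp only [LinearEquiv.coe_coe] at hex ⊢
      have hexκ : ∃ j ∈ R, c j ≠ 0 := by
        obtain ⟨j, hjR, hj0⟩ := hex
        obtain ⟨j', hj', rfl⟩ := Finset.mem_map.mp hjR
        refine ⟨j', hj', ?_⟩
        rw [hLapp] at hj0
        simpa using hj0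
      refine le_trans (hR c hc hexκ) (le_of_eq ?_)
      apply Finset.card_nbij' e.symm e
      · intro j hj
        simp only [Finset.mem_coe, Finset.mem_filter] at hj ⊢
        refine ⟨Finset.mem_map.mpr ⟨j, hj.1, by simp⟩, ?_⟩
        rw [hLapp]
        simpa using hj.2
      · intro j hj
        simp only [Finset.mem_coe, Finset.mem_filter] at hj ⊢
        obtain ⟨hjR, hj0⟩ := hj
        obtain ⟨j', hj', rfl⟩ := Finset.mem_map.mp hjR
        rw [hLapp] at hj0
        simp only [Equiv.coe_toEmbedding, Equiv.apply_symm_apply] at hj0 ⊢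
        constructor
        · simpa using hj'
        · simpa using hj0
      · intro j _; simp
      · intro j _; simp

lemma arith12 (n0 Np i0 s : ℕ) (h2 : 2 ≤ Np) (hi : i0 + 2 ≤ n0) (hs1 : 1 ≤ s)
    (hs2 : s ≤ i0 + 1) :
    ((i0 + 1) * Np - (i0 + 1 - s)) + (n0 - s + 1) +
      ((((i0 + 1) * Np - (i0 + 1 - s)) + (i0 + 1) - 1) / (i0 + 1) - 1) * ((n0 - i0) - 1)
      = Np * n0 + 1 := by
  have hle : i0 + 1 - s ≤ (i0 + 1) * Np :=
    le_trans (by omega) (Nat.le_mul_of_pos_right _ (by omega))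
  have h1 : ((i0 + 1) * Np - (i0 + 1 - s)) + (i0 + 1) - 1 = (i0 + 1) * Np + (s - 1) := by
    omega
  have hdiv : (((i0 + 1) * Np - (i0 + 1 - s)) + (i0 + 1) - 1) / (i0 + 1) = Np := by
    rw [h1, Nat.mul_add_div (by omega), Nat.div_eq_of_lt (by omega), add_zero]
  rw [hdiv]
  have hb1 : 1 ≤ Np := by omega
  have hb2 : s ≤ n0 := by omega
  have hb3 : i0 ≤ n0 := by omega
  have hb4 : 1 ≤ n0 - i0 := by omega
  zify [hle, hs2, hb1, hb2, hb3, hb4]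
  ring

lemma arith3 (n0 Np : ℕ) (h2 : 2 ≤ Np) (hn0 : 2 ≤ n0) :
    (Np - 1) + 2 * n0 + (((Np - 1) + 1 - 1) / 1 - 1) * (n0 - 1) = Np * n0 + 1 := by
  simp only [Nat.add_sub_cancel, Nat.div_one]
  have hb1 : 1 ≤ Np := by omega
  have hb2 : 2 ≤ Np := h2
  have hb3 : 1 ≤ n0 := by omega
  zify [hb1, hb3, show (1:ℕ) ≤ Np - 1 by omega]
  ring


/-- Over a finite field `F_q`, for `m ≥ 3` and integers `2 ≤ n_j ≤ q`,
there exist optimal `(r, δ)`-LRCs of length `n₁⋯n_m` with the three listed families of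
parameters, for any index `j₀`. -/
theorem optimal_multivariate_params
    {F : Type*} [Field F] [Fintype F] [DecidableEq F] {m : ℕ} (hm : 3 ≤ m)
    (n : Fin m → ℕ) (hn : ∀ j, 2 ≤ n j) (hnq : ∀ j, n j ≤ Fintype.card F) (j0 : Fin m) :
    (∀ i0 : ℕ, i0 ≤ n j0 - 2 →
      IsOptimalLRCParams F (∏ j, n j) ((i0 + 1) * ∏ j ∈ Finset.univ.erase j0, n j)
        (n j0 - i0) (i0 + 1) (n j0 - i0)) ∧
    (∀ i0 s : ℕ, max 1 (2 * i0 + 1 - n j0) ≤ s → s ≤ i0 → i0 ≤ n j0 - 2 →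
      IsOptimalLRCParams F (∏ j, n j)
        (((i0 + 1) * ∏ j ∈ Finset.univ.erase j0, n j) - (i0 - s + 1))
        (n j0 - s + 1) (i0 + 1) (n j0 - i0)) ∧
    IsOptimalLRCParams F (∏ j, n j) ((∏ j ∈ Finset.univ.erase j0, n j) - 1)
      (2 * n j0) 1 (n j0) := by
  classical
  set n0 := n j0 with hn0
  set Np := ∏ j ∈ Finset.univ.erase j0, n j with hNp
  have hn02 : 2 ≤ n0 := hn j0
  obtain ⟨α⟩ : Nonempty (Fin n0 ↪ F) :=
    Function.Embedding.nonempty_of_card_le (by simpa using hnq j0)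
  have hjex : (Finset.univ.erase j0).Nonempty := by
    apply Finset.card_pos.mp
    rw [Finset.card_erase_of_mem (Finset.mem_univ _), Finset.card_univ, Fintype.card_fin]
    omega
  obtain ⟨j1, hj1⟩ := hjex
  have hN : 2 ≤ Np :=
    le_trans (hn j1) (Finset.single_le_prod' (fun j _ => by have := hn j; omega) hj1)
  have hprod : ∏ j, n j = Np * n0 := (Finset.prod_erase_mul Finset.univ n (Finset.mem_univ j0)).symm
  let e : Fin (∏ j, n j) ≃ Fin Np × Fin n0 := (finCongr hprod).trans finProdFinEquiv.symm
  refine ⟨?_, ?_, ?_⟩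
  · -- family 1
    intro i0 hi0
    have hi0' : i0 + 2 ≤ n0 := by omega
    obtain ⟨C, hC1, hC2, hC3⟩ := master (N := Np) (s := i0 + 1) (d := n0 - i0) α hi0' le_rfl hN
      (by rw [if_neg (show ¬ (i0 + 1 = 0) by omega)]; omega) (by omega)
    rw [show i0 + 1 - (i0 + 1) = 0 by omega, Nat.sub_zero] at hC1
    obtain ⟨C', hC1', hC2', hC3'⟩ := transport e C hC1 hC2 hC3
    refine ⟨C', hC1', hC2', hC3', ?_⟩
    have := arith12 n0 Np i0 (i0 + 1) hN hi0' (by omega) le_rfl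
    rw [show i0 + 1 - (i0 + 1) = 0 by omega, Nat.sub_zero] at this
    rw [show n0 - (i0 + 1) + 1 = n0 - i0 by omega] at this
    rw [hprod]
    exact this
  · -- family 2
    intro i0 s hsmax hsi hi0
    have hi0' : i0 + 2 ≤ n0 := by omega
    obtain ⟨hs1, hs2⟩ := max_le_iff.mp hsmax
    have hsle : s ≤ i0 + 1 := by omega
    obtain ⟨C, hC1, hC2, hC3⟩ := master (N := Np) (s := s) (d := n0 - s + 1) α hi0' hsle hN
      (by rw [if_neg (show ¬ (s = 0) by omega)]) (by omega)
    rw [show i0 + 1 - s = i0 - s + 1 by omega] at hC1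
    obtain ⟨C', hC1', hC2', hC3'⟩ := transport e C hC1 hC2 hC3
    refine ⟨C', hC1', hC2', hC3', ?_⟩
    have := arith12 n0 Np i0 s hN hi0' hs1 hsle
    rw [show i0 + 1 - s = i0 - s + 1 by omega] at this
    rw [hprod]
    exact this
  · -- family 3
    obtain ⟨C, hC1, hC2, hC3⟩ := master (N := Np) (i0 := 0) (s := 0) (d := 2 * n0) α (by omega)
      (by omega) hN (by rw [if_pos rfl]; omega) (by omega)
    rw [show (0 + 1) * Np - (0 + 1 - 0) = Np - 1 by omega] at hC1
    rw [show n0 - 0 = n0 by omega] at hC3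
    obtain ⟨C', hC1', hC2', hC3'⟩ := transport e C hC1 hC2 hC3
    refine ⟨C', hC1', hC2', hC3', ?_⟩
    have := arith3 n0 Np hN hn02
    rw [hprod]
    exact this
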